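/- Let P be an S×S row-stochastic matrix (S finite) such that every column contains at least one positive entry (every state is accessible), and suppose every row of P has at most U nonzero entries. Then rank(P) ≥ ⌊S/U⌋. -/

import Mathlib

open Matrix Finset

/-- Row-stochastic matrix with every column accessible and at most `U` nonzero
entries per row has rank at least `⌊S/U⌋`. -/
theorem stmt0 (S U : ℕ) (P : Matrix (Fin S) (Fin S) ℝ)
    (hnn : ∀ i j, 0 ≤ P i j)
    (hrow : ∀ i, ∑ j, P i j = 1)
    (hcol : ∀ j, ∃ i, 0 < P i j)
    (hU : ∀ i, (Finset.univ.filter (fun j => P i j ≠ 0)).card ≤ U) :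
    S / U ≤ P.rank := by
  rcases Nat.eq_zero_or_pos S with hS | hS
  · simp [hS]
  rcases Nat.eq_zero_or_pos U with hU0 | hU0
  · exfalso
    have i : Fin S := ⟨0, hS⟩
    have h0 : ∀ j, P i j = 0 := by
      intro j
      by_contra hj
      have : (Finset.univ.filter (fun j => P i j ≠ 0)).card = 0 :=
        Nat.le_zero.mp (hU0 ▸ hU i)
      rw [Finset.card_eq_zero] at this
      exact absurd (Finset.mem_filter.mpr ⟨Finset.mem_univ j, hj⟩) (this ▸ Finset.notMem_empty j)
    have := hrow i
    simp [h0] at this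
  -- main case
  obtain ⟨b, hbsub, hbspan, hbind⟩ := exists_linearIndependent ℝ (Set.range P)
  have hbfin : b.Finite := (Set.finite_range P).subset hbsub
  haveI := hbfin.fintype
  -- rank = card b
  have hrank : P.rank = b.toFinset.card := by
    rw [Matrix.rank_eq_finrank_span_row, Matrix.row_def, ← hbspan, finrank_span_set_eq_card hbind]
  -- every column hit by some element of b
  have hhit : ∀ j : Fin S, ∃ w ∈ b, w j ≠ 0 := by
    intro j
    by_contra h
    push_neg at h
    obtain ⟨i, hi⟩ := hcol j
    have hmem : P i ∈ Submodule.span ℝ b := by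
      rw [hbspan]; exact Submodule.subset_span ⟨i, rfl⟩
    have hker : Submodule.span ℝ b ≤ LinearMap.ker (LinearMap.proj (R := ℝ) (φ := fun _ : Fin S => ℝ) j) := by
      rw [Submodule.span_le]
      intro w hw
      simpa [LinearMap.mem_ker] using h w hw
    have := hker hmem
    simp [LinearMap.mem_ker] at this
    exact absurd this (ne_of_gt hi)
  -- counting
  have hcard : S ≤ b.toFinset.card * U := by
    have hcover : (Finset.univ : Finset (Fin S)) ⊆
        b.toFinset.biUnion (fun w => Finset.univ.filter (fun j => w j ≠ 0)) := by
      intro j _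
      obtain ⟨w, hw, hwj⟩ := hhit j
      exact Finset.mem_biUnion.mpr ⟨w, Set.mem_toFinset.mpr hw, Finset.mem_filter.mpr ⟨Finset.mem_univ j, hwj⟩⟩
    calc S = (Finset.univ : Finset (Fin S)).card := by simp
    _ ≤ (b.toFinset.biUnion (fun w => Finset.univ.filter (fun j => w j ≠ 0))).card :=
        Finset.card_le_card hcover
    _ ≤ ∑ w ∈ b.toFinset, (Finset.univ.filter (fun j => w j ≠ 0)).card :=
        Finset.card_biUnion_le
    _ ≤ ∑ _w ∈ b.toFinset, U := by
        refine Finset.sum_le_sum fun w hw => ?_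
        obtain ⟨i, hi⟩ := hbsub (Set.mem_toFinset.mp hw)
        subst hi
        exact hU i
    _ = b.toFinset.card * U := by rw [Finset.sum_const, smul_eq_mul]
  rw [hrank]
  calc S / U ≤ b.toFinset.card * U / U := Nat.div_le_div_right hcard
  _ = b.toFinset.card := Nat.mul_div_cancel _ hU0
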